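/- In the localized path algebra A of the doubled A_2 quiver with Φ = a_1^{-1} + a_2 as above, the 2-form ω₁ = ¼(e* de dΦ + Φ de* de - e* dΦ^{-1} de - Φ^{-1} de de* + de* d(eΦ) - d(eΦ) de*) ∈ Ω²_R(A) is congruent, modulo the subspace of graded commutators [Ω̄A, Ω̄A], to ½(Φ de* de - Φ^{-1} de de*). -/
import Mathlib


/-- The `k`-span of graded commutators of a graded algebra `Ω` with grading `G`. -/
def gradedCommSpan (k : Type*) [Field k] {Ω : Type*} [Ring Ω] [Algebra k Ω]
    (G : ℕ → Submodule k Ω) : Submodule k Ω :=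
  Submodule.span k
    {z : Ω | ∃ (m l : ℕ) (x y : Ω), x ∈ G m ∧ y ∈ G l ∧
      z = x * y - ((-1 : k) ^ (m * l)) • (y * x)}

theorem omega_aux {k : Type*} [Field k] [CharZero k] {Ω : Type*} [Ring Ω] [Algebra k Ω]
    (G : ℕ → Submodule k Ω)
    (hGmul : ∀ m n : ℕ, ∀ x y : Ω, x ∈ G m → y ∈ G n → x * y ∈ G (m + n))
    (s t p q B ds dt dp dq W : Ω)
    (hs : s ∈ G 0) (ht : t ∈ G 0) (hp : p ∈ G 0) (hq : q ∈ G 0) (hB : B ∈ G 0)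
    (hds : ds ∈ G 1) (hdt : dt ∈ G 1) (hdp : dp ∈ G 1)
    (hW : W = dt * p + t * dp)
    (hdqp : dq * p + q * dp = 0)
    (hpq : p * q = 1)
    (hpsp : p * s * p = s)
    (hE5 : dp * (s * p) + p * (ds * p + s * dp) = ds)
    (hDp : dp = dt * s + t * ds - B * (ds * t + s * dt) * B)
    (hdtt : dt * t = 0) (htdt : t * dt = 0) (htt : t * t = 0)
    (hss0 : s * (s * dt * dt) = 0) :
    (2 : k)⁻¹ • ((2 : k)⁻¹ • (s * dt * dp + p * ds * dt - s * dq * dt - q * dt * ds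
        + ds * W - W * ds))
      - (2 : k)⁻¹ • (p * ds * dt - q * dt * ds) ∈ gradedCommSpan k G := by
  -- derived equalities
  have hdq : dq = -(q * dp * q) := by
    have h1 : dq * p = -(q * dp) := add_eq_zero_iff_eq_neg.mp hdqp
    calc dq = dq * 1 := (mul_one _).symm
      _ = dq * (p * q) := by rw [hpq]
      _ = dq * p * q := (mul_assoc _ _ _).symm
      _ = -(q * dp) * q := by rw [h1]
      _ = -(q * dp * q) := by rw [neg_mul]
  have hsq : s * q = p * s := by
    calc s * q = p * s * p * q := by rw [hpsp]
      _ = p * s * (p * q) := by rw [mul_assoc]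
      _ = p * s := by rw [hpq, mul_one]
  have h2 : p * (s * dp) = ds - dp * (s * p) - p * (ds * p) := by
    rw [eq_sub_iff_add_eq, eq_sub_iff_add_eq]
    calc p * (s * dp) + p * (ds * p) + dp * (s * p)
        = dp * (s * p) + p * (ds * p + s * dp) := by noncomm_ring
      _ = ds := hE5
  have hA : s * dq * dt = -(ds * (q * dt)) + dp * (s * dt) + p * (ds * dt) := by
    calc s * dq * dt = s * -(q * dp * q) * dt := by rw [hdq]
      _ = -(s * q * dp * (q * dt)) := by noncomm_ring
      _ = -(p * s * dp * (q * dt)) := by rw [hsq]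
      _ = -(p * (s * dp) * (q * dt)) := by noncomm_ring
      _ = -((ds - dp * (s * p) - p * (ds * p)) * (q * dt)) := by rw [h2]
      _ = -(ds * (q * dt)) + dp * (s * ((p * q) * dt)) + p * (ds * ((p * q) * dt)) := by
          noncomm_ring
      _ = -(ds * (q * dt)) + dp * (s * dt) + p * (ds * dt) := by rw [hpq, one_mul]
  have hY1 : s * dt * dp = s * dt * dt * s - (s * dt * B) * (ds * (t * B))
      - (s * dt * B) * (s * dt * B) := by
    calc s * dt * dp = s * dt * (dt * s + t * ds - B * (ds * t + s * dt) * B) := by rw [hDp]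
      _ = s * dt * (dt * s) + s * (dt * t) * ds
          - ((s * dt * B) * (ds * (t * B)) + (s * dt * B) * (s * dt * B)) := by noncomm_ring
      _ = s * dt * dt * s - (s * dt * B) * (ds * (t * B))
          - (s * dt * B) * (s * dt * B) := by rw [hdtt]; noncomm_ring
  have hY2 : t * dp * ds = -((t * B * ds) * (t * B * ds)) - (t * B * (s * dt) * B) * ds := by
    calc t * dp * ds = t * (dt * s + t * ds - B * (ds * t + s * dt) * B) * ds := by rw [hDp]
      _ = (t * dt) * (s * ds) + (t * t) * (ds * ds)
          - ((t * B * ds) * (t * B * ds) + (t * B * (s * dt) * B) * ds) := by noncomm_ring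
      _ = -((t * B * ds) * (t * B * ds)) - (t * B * (s * dt) * B) * ds := by
          rw [htdt, htt]; noncomm_ring
  -- memberships
  have gen : ∀ (m l : ℕ) (x y : Ω), x ∈ G m → y ∈ G l →
      x * y - ((-1 : k) ^ (m * l)) • (y * x) ∈ gradedCommSpan k G :=
    fun m l x y hx hy => Submodule.subset_span ⟨m, l, x, y, hx, hy, rfl⟩
  have mem_sdt : s * dt ∈ G 1 := hGmul 0 1 s dt hs hdt
  have mem_qdt : q * dt ∈ G 1 := hGmul 0 1 q dt hq hdt
  have mem_dsdt : ds * dt ∈ G 2 := hGmul 1 1 ds dt hds hdt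
  have mem_dtp : dt * p ∈ G 1 := hGmul 1 0 dt p hdt hp
  have mem_tdp : t * dp ∈ G 1 := hGmul 0 1 t dp ht hdp
  have mem_sdtdt : s * dt * dt ∈ G 2 := hGmul 1 1 (s * dt) dt mem_sdt hdt
  have mem_sdtB : s * dt * B ∈ G 1 := hGmul 1 0 (s * dt) B mem_sdt hB
  have mem_tB : t * B ∈ G 0 := hGmul 0 0 t B ht hB
  have mem_dstB : ds * (t * B) ∈ G 1 := hGmul 1 0 ds (t * B) hds mem_tB
  have mem_tBsdtB : t * B * (s * dt) * B ∈ G 1 :=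
    hGmul 1 0 (t * B * (s * dt)) B (hGmul 0 1 (t * B) (s * dt) mem_tB mem_sdt) hB
  have mem_tBds : t * B * ds ∈ G 1 := hGmul 0 1 (t * B) ds mem_tB hds
  have hB1 : ds * (q * dt) + q * dt * ds ∈ gradedCommSpan k G := by
    simpa using gen 1 1 ds (q * dt) hds mem_qdt
  have hB2 : dp * (s * dt) + s * dt * dp ∈ gradedCommSpan k G := by
    simpa using gen 1 1 dp (s * dt) hdp mem_sdt
  have hB3 : ds * dt * p - p * (ds * dt) ∈ gradedCommSpan k G := by
    simpa using gen 2 0 (ds * dt) p mem_dsdt hp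
  have hB4 : dt * p * ds + ds * (dt * p) ∈ gradedCommSpan k G := by
    simpa using gen 1 1 (dt * p) ds mem_dtp hds
  have hB5 : ds * (t * dp) + t * dp * ds ∈ gradedCommSpan k G := by
    simpa using gen 1 1 ds (t * dp) hds mem_tdp
  have hB6 : s * dt * dt * s ∈ gradedCommSpan k G := by
    simpa [hss0] using gen 2 0 (s * dt * dt) s mem_sdtdt hs
  have hB7 : (s * dt * B) * (ds * (t * B)) + (ds * (t * B)) * (s * dt * B) ∈
      gradedCommSpan k G := by
    simpa using gen 1 1 (s * dt * B) (ds * (t * B)) mem_sdtB mem_dstB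
  have hB8 : (t * B * (s * dt) * B) * ds + ds * (t * B * (s * dt) * B) ∈
      gradedCommSpan k G := by
    simpa using gen 1 1 (t * B * (s * dt) * B) ds mem_tBsdtB hds
  have hB9 : (s * dt * B) * (s * dt * B) + (s * dt * B) * (s * dt * B) ∈
      gradedCommSpan k G := by
    simpa using gen 1 1 (s * dt * B) (s * dt * B) mem_sdtB mem_sdtB
  have hB10 : (t * B * ds) * (t * B * ds) + (t * B * ds) * (t * B * ds) ∈
      gradedCommSpan k G := by
    simpa using gen 1 1 (t * B * ds) (t * B * ds) mem_tBds mem_tBds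
  have hBig : (ds * (q * dt) + q * dt * ds)
      - (dp * (s * dt) + s * dt * dp)
      + ((ds * dt * p - p * (ds * dt)) + (ds * dt * p - p * (ds * dt)))
      - (dt * p * ds + ds * (dt * p))
      + (ds * (t * dp) + t * dp * ds)
      + (s * dt * dt * s + s * dt * dt * s)
      - (((s * dt * B) * (ds * (t * B)) + (ds * (t * B)) * (s * dt * B))
         + ((s * dt * B) * (ds * (t * B)) + (ds * (t * B)) * (s * dt * B)))
      + (((t * B * (s * dt) * B) * ds + ds * (t * B * (s * dt) * B))
         + ((t * B * (s * dt) * B) * ds + ds * (t * B * (s * dt) * B)))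
      - ((s * dt * B) * (s * dt * B) + (s * dt * B) * (s * dt * B))
      + ((t * B * ds) * (t * B * ds) + (t * B * ds) * (t * B * ds)) ∈
      gradedCommSpan k G := by
    exact add_mem (sub_mem (add_mem (sub_mem (add_mem (add_mem (sub_mem (add_mem
      (sub_mem hB1 hB2) (add_mem hB3 hB3)) hB4) hB5) (add_mem hB6 hB6))
      (add_mem hB7 hB7)) (add_mem hB8 hB8)) hB9) hB10
  have key : (s * dt * dp + p * ds * dt - s * dq * dt - q * dt * ds + ds * W - W * ds)
      - ((p * ds * dt - q * dt * ds) + (p * ds * dt - q * dt * ds))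
      = (ds * (q * dt) + q * dt * ds)
      - (dp * (s * dt) + s * dt * dp)
      + ((ds * dt * p - p * (ds * dt)) + (ds * dt * p - p * (ds * dt)))
      - (dt * p * ds + ds * (dt * p))
      + (ds * (t * dp) + t * dp * ds)
      + (s * dt * dt * s + s * dt * dt * s)
      - (((s * dt * B) * (ds * (t * B)) + (ds * (t * B)) * (s * dt * B))
         + ((s * dt * B) * (ds * (t * B)) + (ds * (t * B)) * (s * dt * B)))
      + (((t * B * (s * dt) * B) * ds + ds * (t * B * (s * dt) * B))
         + ((t * B * (s * dt) * B) * ds + ds * (t * B * (s * dt) * B)))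
      - ((s * dt * B) * (s * dt * B) + (s * dt * B) * (s * dt * B))
      + ((t * B * ds) * (t * B * ds) + (t * B * ds) * (t * B * ds)) := by
    rw [hW, mul_add, add_mul, hA, hY1, hY2]
    noncomm_ring
  have heq : (2 : k)⁻¹ • ((2 : k)⁻¹ • (s * dt * dp + p * ds * dt - s * dq * dt - q * dt * ds
        + ds * W - W * ds))
      - (2 : k)⁻¹ • (p * ds * dt - q * dt * ds)
      = (4 : k)⁻¹ • ((s * dt * dp + p * ds * dt - s * dq * dt - q * dt * ds + ds * W - W * ds)
        - ((p * ds * dt - q * dt * ds) + (p * ds * dt - q * dt * ds))) := by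
    module
  rw [heq, key]
  exact Submodule.smul_mem _ _ hBig

/-- In the localized path algebra `A` of the doubled `A₂` quiver with `Φ = a₁⁻¹ + a₂`, the
`2`-form
`ω₁ = ¼(e* de dΦ + Φ de* de - e* dΦ⁻¹ de - Φ⁻¹ de de* + de* d(eΦ) - d(eΦ) de*) ∈ Ω²_R(A)`
is congruent, modulo the subspace of graded commutators `[Ω̄A, Ω̄A]`, to
`½(Φ de* de - Φ⁻¹ de de*)`.

The relative noncommutative forms are axiomatised as a graded `k`-algebra `Ω` with unital
embedding `ι : A → Ω` and a degree-`1` graded derivation `D` squaring to zero and vanishing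
on `R = ke₁ ⊕ ke₂`. -/
theorem omega_one_congruence_A2
    {k : Type*} [Field k] [CharZero k] {A : Type*} [Ring A] [Algebra k A]
    {Ω : Type*} [Ring Ω] [Algebra k Ω]
    -- the localized path algebra of the doubled `A₂` quiver
    (e1 e2 E Es b1 b2 : A)
    (h1 : e1 * e1 = e1) (h2 : e2 * e2 = e2)
    (h12 : e1 * e2 = 0) (h21 : e2 * e1 = 0) (hsum : e1 + e2 = 1)
    (hE : e2 * E * e1 = E) (hEs : e1 * Es * e2 = Es)
    (hb1 : e1 * b1 * e1 = b1)
    (hb1l : (e1 + Es * E) * b1 = e1) (hb1r : b1 * (e1 + Es * E) = e1)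
    (hb2 : e2 * b2 * e2 = b2)
    (hb2l : (e2 + E * Es) * b2 = e2) (hb2r : b2 * (e2 + E * Es) = e2)
    -- the algebra of noncommutative differential forms relative to `R`
    (ι : A →ₐ[k] Ω)
    (G : ℕ → Submodule k Ω)
    (hG0 : ∀ a : A, ι a ∈ G 0)
    (hGmul : ∀ m n : ℕ, ∀ x y : Ω, x ∈ G m → y ∈ G n → x * y ∈ G (m + n))
    (D : Ω →ₗ[k] Ω)
    (hGD : ∀ m : ℕ, ∀ x : Ω, x ∈ G m → D x ∈ G (m + 1))
    (hLeib : ∀ (m : ℕ) (x y : Ω), x ∈ G m →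
      D (x * y) = D x * y + ((-1 : k) ^ m) • (x * D y))
    (hDD : ∀ x : Ω, D (D x) = 0)
    (hDe1 : D (ι e1) = 0) (hDe2 : D (ι e2) = 0) :
    -- `Φ = a₁⁻¹ + a₂` and `Φ⁻¹ = a₁ + a₂⁻¹`
    (2 : k)⁻¹ • ((2 : k)⁻¹ •
        (ι Es * D (ι E) * D (ι (b1 + (e2 + E * Es))) +
         ι (b1 + (e2 + E * Es)) * D (ι Es) * D (ι E) -
         ι Es * D (ι ((e1 + Es * E) + b2)) * D (ι E) -
         ι ((e1 + Es * E) + b2) * D (ι E) * D (ι Es) +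
         D (ι Es) * D (ι (E * (b1 + (e2 + E * Es)))) -
         D (ι (E * (b1 + (e2 + E * Es)))) * D (ι Es))) -
      (2 : k)⁻¹ • (ι (b1 + (e2 + E * Es)) * D (ι Es) * D (ι E) -
        ι ((e1 + Es * E) + b2) * D (ι E) * D (ι Es)) ∈
      gradedCommSpan k G := by
  -- corner facts in A
  have fa1 : E * e1 = E := by
    conv_lhs => rw [← hE]
    rw [mul_assoc (e2 * E) e1 e1, h1, hE]
  have fa2 : e2 * E = E := by
    conv_lhs => rw [← hE]
    rw [← mul_assoc e2 (e2 * E) e1, ← mul_assoc e2 e2 E, h2, hE]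
  have fa3 : e1 * E = 0 := by
    conv_lhs => rw [← hE]
    rw [← mul_assoc e1 (e2 * E) e1, ← mul_assoc e1 e2 E, h12, zero_mul, zero_mul]
  have fa4 : E * e2 = 0 := by
    conv_lhs => rw [← hE]
    rw [mul_assoc (e2 * E) e1 e2, h12, mul_zero]
  have fb1 : Es * e2 = Es := by
    conv_lhs => rw [← hEs]
    rw [mul_assoc (e1 * Es) e2 e2, h2, hEs]
  have fb2 : e1 * Es = Es := by
    conv_lhs => rw [← hEs]
    rw [← mul_assoc e1 (e1 * Es) e2, ← mul_assoc e1 e1 Es, h1, hEs]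
  have fb3 : Es * e1 = 0 := by
    conv_lhs => rw [← hEs]
    rw [mul_assoc (e1 * Es) e2 e1, h21, mul_zero]
  have fb4 : e2 * Es = 0 := by
    conv_lhs => rw [← hEs]
    rw [← mul_assoc e2 (e1 * Es) e2, ← mul_assoc e2 e1 Es, h21, zero_mul, zero_mul]
  have fc1 : b1 * e1 = b1 := by
    conv_lhs => rw [← hb1]
    rw [mul_assoc (e1 * b1) e1 e1, h1, hb1]
  have fc2 : e1 * b1 = b1 := by
    conv_lhs => rw [← hb1]
    rw [← mul_assoc e1 (e1 * b1) e1, ← mul_assoc e1 e1 b1, h1, hb1]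
  have fd1 : b2 * e2 = b2 := by
    conv_lhs => rw [← hb2]
    rw [mul_assoc (e2 * b2) e2 e2, h2, hb2]
  have fd2 : e2 * b2 = b2 := by
    conv_lhs => rw [← hb2]
    rw [← mul_assoc e2 (e2 * b2) e2, ← mul_assoc e2 e2 b2, h2, hb2]
  have fEE : E * E = 0 := by
    conv_lhs => rw [← fa1]
    rw [mul_assoc E e1 (E * e1), ← mul_assoc e1 E e1, fa3, zero_mul, mul_zero]
  have fss : Es * Es = 0 := by
    conv_lhs => rw [← fb1]
    rw [mul_assoc Es e2 (Es * e2), ← mul_assoc e2 Es e2, fb4, zero_mul, mul_zero]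
  have fb1b2 : b1 * b2 = 0 := by
    conv_lhs => rw [← fc1, ← fd2]
    rw [mul_assoc b1 e1 (e2 * b2), ← mul_assoc e1 e2 b2, h12, zero_mul, mul_zero]
  have fb2b1 : b2 * b1 = 0 := by
    conv_lhs => rw [← fd1, ← fc2]
    rw [mul_assoc b2 e2 (e1 * b1), ← mul_assoc e2 e1 b1, h21, zero_mul, mul_zero]
  have fEsb1 : Es * b1 = 0 := by
    conv_lhs => rw [← fc2]
    rw [← mul_assoc Es e1 b1, fb3, zero_mul]
  -- main A identities
  have I1 : (b1 + (e2 + E * Es)) * ((e1 + Es * E) + b2) = 1 := by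
    have z2 : (e2 + E * Es) * (e1 + Es * E) = 0 := by
      calc (e2 + E * Es) * (e1 + Es * E)
          = e2 * e1 + (e2 * Es) * E + (E * (Es * e1) + E * ((Es * Es) * E)) := by noncomm_ring
        _ = 0 := by rw [h21, fb4, fb3, fss]; simp
    calc (b1 + (e2 + E * Es)) * ((e1 + Es * E) + b2)
        = b1 * (e1 + Es * E) + b1 * b2 + ((e2 + E * Es) * (e1 + Es * E)
            + (e2 + E * Es) * b2) := by noncomm_ring
      _ = e1 + 0 + (0 + e2) := by rw [hb1r, fb1b2, z2, hb2l]
      _ = 1 := by rw [add_zero, zero_add]; exact hsum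
  have I2 : ((e1 + Es * E) + b2) * (b1 + (e2 + E * Es)) = 1 := by
    have z3 : (e1 + Es * E) * (e2 + E * Es) = 0 := by
      calc (e1 + Es * E) * (e2 + E * Es)
          = e1 * e2 + (e1 * E) * Es + (Es * (E * e2) + Es * ((E * E) * Es)) := by noncomm_ring
        _ = 0 := by rw [h12, fa3, fa4, fEE]; simp
    calc ((e1 + Es * E) + b2) * (b1 + (e2 + E * Es))
        = (e1 + Es * E) * b1 + (e1 + Es * E) * (e2 + E * Es) + (b2 * b1
            + b2 * (e2 + E * Es)) := by noncomm_ring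
      _ = e1 + 0 + (0 + e2) := by rw [hb1l, z3, fb2b1, hb2r]
      _ = 1 := by rw [add_zero, zero_add]; exact hsum
  have I3 : (b1 + (e2 + E * Es)) * Es * (b1 + (e2 + E * Es)) = Es := by
    have hPhiEs : (b1 + (e2 + E * Es)) * Es = b1 * Es := by
      calc (b1 + (e2 + E * Es)) * Es = b1 * Es + (e2 * Es + E * (Es * Es)) := by noncomm_ring
        _ = b1 * Es := by rw [fb4, fss, mul_zero]; simp
    calc (b1 + (e2 + E * Es)) * Es * (b1 + (e2 + E * Es))
        = (b1 * Es) * (b1 + (e2 + E * Es)) := by rw [hPhiEs]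
      _ = b1 * (Es * b1) + (b1 * (Es * e2) + b1 * (Es * (E * Es))) := by noncomm_ring
      _ = b1 * (Es * e2) + b1 * (Es * (E * Es)) := by rw [fEsb1, mul_zero, zero_add]
      _ = b1 * ((e1 + Es * E) * Es) := by rw [fb1, add_mul, fb2]; noncomm_ring
      _ = b1 * (e1 + Es * E) * Es := by rw [mul_assoc]
      _ = e1 * Es := by rw [hb1r]
      _ = Es := fb2
  -- Ω level
  have leib0 : ∀ (a : A) (y : Ω), D (ι a * y) = D (ι a) * y + ι a * D y := by
    intro a y
    simpa using hLeib 0 (ι a) y (hG0 a)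
  have hD1 : D (1 : Ω) = 0 := by
    have h := leib0 1 (1 : Ω)
    rw [map_one, one_mul, mul_one, one_mul] at h
    exact left_eq_add.mp h
  have hDtE1 : D (ι E) = D (ι E) * ι e1 := by
    conv_lhs => rw [← fa1]
    rw [map_mul, leib0, hDe1, mul_zero, add_zero]
  have hDtE2 : D (ι E) = ι e2 * D (ι E) := by
    conv_lhs => rw [← fa2]
    rw [map_mul, leib0, hDe2, zero_mul, zero_add]
  have hdtt : D (ι E) * ι E = 0 := by
    conv_lhs => rw [hDtE1]
    rw [mul_assoc (D (ι E)) (ι e1) (ι E), ← map_mul, fa3, map_zero, mul_zero]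
  have htdt : ι E * D (ι E) = 0 := by
    conv_lhs => rw [hDtE2]
    rw [← mul_assoc (ι E) (ι e2) (D (ι E)), ← map_mul, fa4, map_zero, zero_mul]
  have htt : ι E * ι E = 0 := by rw [← map_mul, fEE, map_zero]
  have hss0 : ι Es * (ι Es * D (ι E) * D (ι E)) = 0 := by
    rw [← mul_assoc (ι Es) (ι Es * D (ι E)) (D (ι E)),
      ← mul_assoc (ι Es) (ι Es) (D (ι E)), ← map_mul, fss, map_zero, zero_mul, zero_mul]
  have hW : D (ι (E * (b1 + (e2 + E * Es))))
      = D (ι E) * ι (b1 + (e2 + E * Es)) + ι E * D (ι (b1 + (e2 + E * Es))) := by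
    rw [map_mul]; exact leib0 E (ι (b1 + (e2 + E * Es)))
  have hdqp : D (ι ((e1 + Es * E) + b2)) * ι (b1 + (e2 + E * Es))
      + ι ((e1 + Es * E) + b2) * D (ι (b1 + (e2 + E * Es))) = 0 := by
    rw [← leib0, ← map_mul, I2, map_one, hD1]
  have hpq : ι (b1 + (e2 + E * Es)) * ι ((e1 + Es * E) + b2) = 1 := by
    rw [← map_mul, I1, map_one]
  have hpsp : ι (b1 + (e2 + E * Es)) * ι Es * ι (b1 + (e2 + E * Es)) = ι Es := by
    rw [← map_mul, ← map_mul, I3]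
  have hE5 : D (ι (b1 + (e2 + E * Es))) * (ι Es * ι (b1 + (e2 + E * Es)))
      + ι (b1 + (e2 + E * Es)) * (D (ι Es) * ι (b1 + (e2 + E * Es))
        + ι Es * D (ι (b1 + (e2 + E * Es)))) = D (ι Es) := by
    rw [show D (ι Es) * ι (b1 + (e2 + E * Es)) + ι Es * D (ι (b1 + (e2 + E * Es)))
          = D (ι (Es * (b1 + (e2 + E * Es)))) from by rw [map_mul, leib0],
        show (ι Es * ι (b1 + (e2 + E * Es)) : Ω) = ι (Es * (b1 + (e2 + E * Es))) from
          (map_mul ι Es _).symm,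
        ← leib0, ← map_mul,
        show (b1 + (e2 + E * Es)) * (Es * (b1 + (e2 + E * Es))) = Es from by
          rw [← mul_assoc]; exact I3]
  -- hDp
  have hDBright : D (ι b1) = D (ι b1) * ι e1 := by
    conv_lhs => rw [← fc1]
    rw [map_mul, leib0, hDe1, mul_zero, add_zero]
  have hDsum : D (ι (e1 + Es * E)) = D (ι Es) * ι E + ι Es * D (ι E) := by
    rw [map_add, map_add, hDe1, zero_add, map_mul, leib0]
  have hstep : D (ι b1) * ι (e1 + Es * E) + ι b1 * D (ι (e1 + Es * E)) = 0 := by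
    rw [← leib0, ← map_mul, hb1r, hDe1]
  have h7' : D (ι b1) * ι (e1 + Es * E)
      = -(ι b1 * (D (ι Es) * ι E + ι Es * D (ι E))) := by
    have h := add_eq_zero_iff_eq_neg.mp hstep
    rw [hDsum] at h; exact h
  have hDB : D (ι b1) = -(ι b1 * (D (ι Es) * ι E + ι Es * D (ι E)) * ι b1) := by
    calc D (ι b1) = D (ι b1) * ι e1 := hDBright
      _ = D (ι b1) * ι ((e1 + Es * E) * b1) := by rw [hb1l]
      _ = D (ι b1) * (ι (e1 + Es * E) * ι b1) := by rw [map_mul]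
      _ = D (ι b1) * ι (e1 + Es * E) * ι b1 := by rw [← mul_assoc]
      _ = -(ι b1 * (D (ι Es) * ι E + ι Es * D (ι E))) * ι b1 := by rw [h7']
      _ = -(ι b1 * (D (ι Es) * ι E + ι Es * D (ι E)) * ι b1) := by rw [neg_mul]
  have hDp : D (ι (b1 + (e2 + E * Es))) = D (ι E) * ι Es + ι E * D (ι Es)
      - ι b1 * (D (ι Es) * ι E + ι Es * D (ι E)) * ι b1 := by
    rw [map_add, map_add, map_add, map_add, hDe2, zero_add, map_mul, leib0, hDB]
    noncomm_ring
  exact omega_aux G hGmul (ι Es) (ι E) (ι (b1 + (e2 + E * Es))) (ι ((e1 + Es * E) + b2))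
    (ι b1) (D (ι Es)) (D (ι E)) (D (ι (b1 + (e2 + E * Es)))) (D (ι ((e1 + Es * E) + b2)))
    (D (ι (E * (b1 + (e2 + E * Es)))))
    (hG0 Es) (hG0 E) (hG0 _) (hG0 _) (hG0 b1)
    (hGD 0 _ (hG0 Es)) (hGD 0 _ (hG0 E)) (hGD 0 _ (hG0 _))
    hW hdqp hpq hpsp hE5 hDp hdtt htdt htt hss0
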